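/- Let P be a finite simplicial complex in ℝ^N. Then the barycentric coordinate map β : |P| → ℝ^{P^{(0)}}, sending x to its vector of barycentric coordinates (β_v(x))_{v ∈ P^{(0)}}, is Lipschitz with respect to the Euclidean metrics. -/

import Mathlib

open Finset

set_option maxHeartbeats 1000000

section BaryAux
set_option linter.unusedSectionVars false
set_option maxHeartbeats 1000000
variable {F : Type*} [NormedAddCommGroup F] [NormedSpace ℝ F] [FiniteDimensional ℝ F]
variable {G : Type*} [NormedAddCommGroup G] [NormedSpace ℝ G]
variable {κ : Type*} [Fintype κ]

lemma coneCara (g : κ → F) :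
    ∀ (n : ℕ) (c : κ → ℝ), (univ.filter fun i => c i ≠ 0).card ≤ n → (∀ i, 0 ≤ c i) →
    ∃ (S : Finset κ) (c' : κ → ℝ), LinearIndependent ℝ (fun i : S => g i) ∧
      (∀ i, 0 ≤ c' i) ∧ (∀ i, i ∉ S → c' i = 0) ∧ ∑ i, c' i • g i = ∑ i, c i • g i := by
  classical
  intro n
  induction n with
  | zero =>
    intro c hcard _
    have hc : ∀ i, c i = 0 := by
      intro i
      by_contra h
      have : i ∈ univ.filter fun i => c i ≠ 0 := by simp [h]
      have := Finset.card_pos.2 ⟨i, this⟩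
      omega
    refine ⟨∅, 0, ?_, by simp, by simp, by simp [hc]⟩
    exact linearIndependent_empty_type
  | succ n ih =>
    intro c hcard hc
    set supp := univ.filter fun i => c i ≠ 0 with hsupp
    by_cases hli : LinearIndependent ℝ (fun i : supp => g i)
    · refine ⟨supp, c, hli, hc, ?_, rfl⟩
      intro i hi
      by_contra h
      exact hi (by simp [hsupp, h])
    · -- get a nontrivial relation supported on supp
      obtain ⟨h, hrel, j, hj⟩ := Fintype.not_linearIndependent_iff.1 hli
      -- extend to κ
      set μ : κ → ℝ := fun i => if hi : i ∈ supp then h ⟨i, hi⟩ else 0 with hμ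
      have hμsum : ∑ i, μ i • g i = 0 := by
        have e1 : ∑ i, μ i • g i = ∑ i ∈ supp, μ i • g i :=
          (Finset.sum_subset (subset_univ _) (fun i _ hi => by simp [hμ, hi])).symm
        have e2 : ∑ i ∈ supp, μ i • g i = ∑ i ∈ supp.attach, h i • g (i : κ) := by
          rw [← Finset.sum_attach supp (fun i => μ i • g i)]
          exact Finset.sum_congr rfl fun i _ => by simp [hμ, i.2]
        rw [e1, e2]
        exact hrel
      have hμj : μ (j : κ) ≠ 0 := by simp [hμ, j.2, hj]
      -- WLOG some positive entry
      have key : ∀ μ : κ → ℝ, (∀ i, i ∉ supp → μ i = 0) → (∑ i, μ i • g i = 0) →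
          (∃ i, 0 < μ i) →
          ∃ (S : Finset κ) (c' : κ → ℝ), LinearIndependent ℝ (fun i : S => g i) ∧
            (∀ i, 0 ≤ c' i) ∧ (∀ i, i ∉ S → c' i = 0) ∧ ∑ i, c' i • g i = ∑ i, c i • g i := by
        intro μ hμ0 hμsum ⟨i₁, hi₁⟩
        set T : Finset κ := univ.filter fun i => 0 < μ i with hT
        have hTne : T.Nonempty := ⟨i₁, by simp [hT, hi₁]⟩
        obtain ⟨i₀, hi₀T, hi₀min⟩ := T.exists_min_image (fun i => c i / μ i) hTne
        have hμi₀ : 0 < μ i₀ := by simpa [hT] using hi₀T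
        set t₀ := c i₀ / μ i₀ with ht₀
        have ht₀0 : 0 ≤ t₀ := div_nonneg (hc _) hμi₀.le
        set c' : κ → ℝ := fun i => c i - t₀ * μ i with hc'
        have hc'0 : ∀ i, 0 ≤ c' i := by
          intro i
          by_cases hi : 0 < μ i
          · have := hi₀min i (by simp [hT, hi])
            show 0 ≤ c i - t₀ * μ i
            have : t₀ * μ i ≤ c i := by
              rw [div_le_div_iff₀ hμi₀ hi] at this
              calc t₀ * μ i = c i₀ / μ i₀ * μ i := rfl
                _ ≤ c i := by
                  rw [div_mul_eq_mul_div, div_le_iff₀ hμi₀]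
                  linarith
            linarith
          · push_neg at hi
            have : 0 ≤ -(t₀ * μ i) := by
              rw [neg_nonneg]
              exact mul_nonpos_of_nonneg_of_nonpos ht₀0 hi
            show 0 ≤ c i - t₀ * μ i
            linarith [hc i]
        have hsub : (univ.filter fun i => c' i ≠ 0) ⊆ supp.erase i₀ := by
          intro i hi
          simp only [mem_filter, mem_univ, true_and] at hi
          refine Finset.mem_erase.2 ⟨?_, ?_⟩
          · rintro rfl
            refine hi ?_
            show c i - c i / μ i * μ i = 0
            rw [div_mul_cancel₀ _ hμi₀.ne']
            ring
          · simp only [hsupp, mem_filter, mem_univ, true_and]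
            intro h0
            refine hi ?_
            show c i - t₀ * μ i = 0
            rw [h0, hμ0 i (by simp [hsupp, h0])]
            ring
        have hi₀supp : i₀ ∈ supp := by
          by_contra h
          exact hμi₀.ne' (hμ0 i₀ h)
        have hcard' : (univ.filter fun i => c' i ≠ 0).card ≤ n := by
          calc (univ.filter fun i => c' i ≠ 0).card ≤ (supp.erase i₀).card :=
                Finset.card_le_card hsub
            _ = supp.card - 1 := Finset.card_erase_of_mem hi₀supp
            _ ≤ n := by omega
        obtain ⟨S, c'', h1, h2, h3, h4⟩ := ih c' hcard' hc'0
        refine ⟨S, c'', h1, h2, h3, ?_⟩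
        rw [h4, hc']
        simp only [sub_smul, Finset.sum_sub_distrib, mul_smul]
        rw [← Finset.smul_sum, hμsum, smul_zero, sub_zero]
      rcases lt_or_gt_of_ne hμj with hneg | hpos
      · exact key (-μ) (fun i hi => by simp [hμ, hi]) (by simpa using hμsum)
          ⟨j, by simpa using hneg⟩
      · exact key μ (fun i hi => by simp [hμ, hi]) hμsum ⟨j, hpos⟩

lemma coneClosed (g : κ → F) :
    IsClosed {x : F | ∃ c : κ → ℝ, (∀ i, 0 ≤ c i) ∧ ∑ i, c i • g i = x} := by
  classical
  have key : {x : F | ∃ c : κ → ℝ, (∀ i, 0 ≤ c i) ∧ ∑ i, c i • g i = x}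
      = ⋃ (S : Finset κ) (_ : LinearIndependent ℝ (fun i : S => g i)),
        (fun c : (S → ℝ) => ∑ i : S, c i • g i) '' {c | ∀ i, 0 ≤ c i} := by
    ext x
    simp only [Set.mem_setOf_eq, Set.mem_iUnion, Set.mem_image]
    constructor
    · rintro ⟨c, hc, rfl⟩
      obtain ⟨S, c', hli, h0, hout, hsum⟩ :=
        coneCara g (univ.filter fun i => c i ≠ 0).card c le_rfl hc
      refine ⟨S, hli, fun i => c' i, fun i => h0 _, ?_⟩
      rw [← hsum]
      have e : ∑ i : S, c' (i : κ) • g i = ∑ i ∈ S, c' i • g i := by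
        rw [Finset.univ_eq_attach]
        exact Finset.sum_attach S (fun i => c' i • g i)
      rw [e]
      exact Finset.sum_subset (subset_univ _) (fun i _ hi => by simp [hout i hi])
    · rintro ⟨S, hli, c, hc, rfl⟩
      refine ⟨fun i => if h : i ∈ S then c ⟨i, h⟩ else 0, fun i => ?_, ?_⟩
      · by_cases h : i ∈ S <;> simp [h, hc _]
      · have e1 : ∑ i ∈ S, (if h : i ∈ S then c ⟨i, h⟩ else 0) • g i
            = ∑ i : κ, (if h : i ∈ S then c ⟨i, h⟩ else 0) • g i :=
          Finset.sum_subset (subset_univ S) fun i _ hi => by simp [hi]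
        rw [← e1, ← Finset.sum_attach S (fun i => (if h : i ∈ S then c ⟨i, h⟩ else 0) • g i)]
        rw [Finset.univ_eq_attach]
        exact Finset.sum_congr rfl fun i _ => by simp [i.2]
  rw [key]
  refine isClosed_iUnion_of_finite fun S => isClosed_iUnion_of_finite fun hli => ?_
  set T := (Fintype.linearCombination ℝ) (fun i : S => g i) with hTdef
  have hT : ∀ c : S → ℝ, T c = ∑ i : S, c i • g i := fun c => rfl
  have hker : LinearMap.ker T = ⊥ := by
    rw [LinearMap.ker_eq_bot']
    intro c hc
    rw [hT] at hc
    funext i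
    exact Fintype.linearIndependent_iff.1 hli c hc i
  have hemb : Topology.IsClosedEmbedding T := LinearMap.isClosedEmbedding_of_injective hker
  have : (fun c : (S → ℝ) => ∑ i : S, c i • g i) = fun c => T c := by
    funext c; exact (hT c).symm
  rw [this]
  have hcl : IsClosed {c : S → ℝ | ∀ i, 0 ≤ c i} := by
    have : {c : S → ℝ | ∀ i, 0 ≤ c i} = ⋂ i, {c : S → ℝ | 0 ≤ c i} := by
      ext c; simp [Set.mem_iInter]
    rw [this]
    exact isClosed_iInter fun i => isClosed_le continuous_const (continuous_apply i)
  exact hemb.isClosedMap _ hcl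

lemma coneMin (g : κ → F) (L : F →ₗ[ℝ] G)
    (hL : ∀ x, (∃ c : κ → ℝ, (∀ i, 0 ≤ c i) ∧ ∑ i, c i • g i = x) → L x = 0 → x = 0) :
    ∃ m : ℝ, 0 < m ∧ ∀ x, (∃ c : κ → ℝ, (∀ i, 0 ≤ c i) ∧ ∑ i, c i • g i = x) →
      m * ‖x‖ ≤ ‖L x‖ := by
  classical
  set Cn := {x : F | ∃ c : κ → ℝ, (∀ i, 0 ≤ c i) ∧ ∑ i, c i • g i = x} with hCn
  have hscale : ∀ x ∈ Cn, ∀ a : ℝ, 0 ≤ a → a • x ∈ Cn := by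
    rintro x ⟨c, hc, rfl⟩ a ha
    exact ⟨fun i => a * c i, fun i => mul_nonneg ha (hc i),
      by simp [Finset.smul_sum, mul_smul]⟩
  have hLcont : Continuous L := L.continuous_of_finiteDimensional
  set S := Cn ∩ Metric.sphere (0 : F) 1 with hS
  have hScompact : IsCompact S :=
    (isCompact_sphere (0 : F) 1).inter_left (coneClosed g)
  by_cases hSne : S.Nonempty
  · obtain ⟨x₀, hx₀S, hmin⟩ := hScompact.exists_isMinOn hSne
      ((continuous_norm.comp hLcont).continuousOn)
    have hx₀Cn : x₀ ∈ Cn := hx₀S.1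
    have hx₀n : ‖x₀‖ = 1 := by simpa using hx₀S.2
    have hm : 0 < ‖L x₀‖ := by
      rcases (norm_nonneg (L x₀)).lt_or_eq with h | h
      · exact h
      · exfalso
        have : L x₀ = 0 := by
          rw [← norm_eq_zero]; exact h.symm ▸ rfl
        have := hL x₀ hx₀Cn this
        rw [this] at hx₀n
        simp at hx₀n
    refine ⟨‖L x₀‖, hm, ?_⟩
    rintro x hx
    rcases eq_or_ne x 0 with rfl | hx0
    · simp
    · have hxn : 0 < ‖x‖ := norm_pos_iff.2 hx0
      have hmem : (‖x‖⁻¹ • x) ∈ S := by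
        refine ⟨hscale x hx _ (inv_nonneg.2 hxn.le), ?_⟩
        simp [norm_smul, abs_of_nonneg (inv_nonneg.2 hxn.le), inv_mul_cancel₀ hxn.ne']
      have := hmin hmem
      simp only [Set.mem_setOf_eq, Function.comp_apply, map_smul, norm_smul, Real.norm_eq_abs,
        abs_of_nonneg (inv_nonneg.2 hxn.le)] at this
      calc ‖L x₀‖ * ‖x‖ ≤ ‖x‖⁻¹ * ‖L x‖ * ‖x‖ := by
            apply mul_le_mul_of_nonneg_right _ hxn.le
            exact this
        _ = ‖L x‖ := by field_simp
  · refine ⟨1, one_pos, ?_⟩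
    intro x hx
    rcases eq_or_ne x 0 with rfl | hx0
    · simp
    · exfalso
      have hxn : 0 < ‖x‖ := norm_pos_iff.2 hx0
      exact hSne ⟨‖x‖⁻¹ • x, hscale x hx _ (inv_nonneg.2 hxn.le), by
        simp [norm_smul, abs_of_nonneg (inv_nonneg.2 hxn.le), inv_mul_cancel₀ hxn.ne']⟩

end BaryAux

lemma sum_coe_sort' {α M : Type*} [AddCommMonoid M] (A : Finset α) (f : α → M) :
    ∑ i : A, f (i : α) = ∑ u ∈ A, f u := by
  rw [Finset.univ_eq_attach]; exact Finset.sum_attach _ _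

open Classical in
lemma pairBound {N : ℕ}
    (K : Geometry.SimplicialComplex ℝ (EuclideanSpace ℝ (Fin N)))
    (hfin : K.faces.Finite) {s t : Finset (EuclideanSpace ℝ (Fin N))}
    (hs : s ∈ K.faces) (ht : t ∈ K.faces) :
    ∃ C : ℝ, 0 ≤ C ∧ ∀ (βx βy : EuclideanSpace ℝ (Fin N) → ℝ)
      (x y : EuclideanSpace ℝ (Fin N)),
      (∀ u, u ∉ s → βx u = 0) → (∀ u, 0 ≤ βx u) → (∑ u ∈ s, βx u) = 1 →
      (∑ u ∈ s, βx u • u) = x →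
      (∀ u, u ∉ t → βy u = 0) → (∀ u, 0 ≤ βy u) → (∑ u ∈ t, βy u) = 1 →
      (∑ u ∈ t, βy u • u) = y →
      Real.sqrt (∑ u ∈ hfin.toFinset.biUnion id, (βx u - βy u) ^ 2) ≤ C * ‖x - y‖ := by
  set V : Finset (EuclideanSpace ℝ (Fin N)) := hfin.toFinset.biUnion id with hV
  have hsV : ∀ u ∈ s, u ∈ V := fun u hu =>
    Finset.mem_biUnion.2 ⟨s, hfin.mem_toFinset.2 hs, hu⟩
  have htV : ∀ u ∈ t, u ∈ V := fun u hu =>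
    Finset.mem_biUnion.2 ⟨t, hfin.mem_toFinset.2 ht, hu⟩
  set ι := {u : (EuclideanSpace ℝ (Fin N)) // u ∈ V}
  set F := EuclideanSpace ℝ ι with hF
  -- indicator vectors
  set χ : (EuclideanSpace ℝ (Fin N)) → F := fun u => WithLp.toLp 2 (fun i : ι => if u = (i : (EuclideanSpace ℝ (Fin N))) then (1:ℝ) else 0) with hχ
  set κ : Type _ := {u : (EuclideanSpace ℝ (Fin N)) // u ∈ s} × {u : (EuclideanSpace ℝ (Fin N)) // u ∈ t} with hκ
  set g : κ → F := fun p => χ (p.1 : (EuclideanSpace ℝ (Fin N))) - χ (p.2 : (EuclideanSpace ℝ (Fin N))) with hg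
  -- the linear map recovering the point
  set L : F →ₗ[ℝ] (EuclideanSpace ℝ (Fin N)) :=
    { toFun := fun w => ∑ i : ι, w i • (i : (EuclideanSpace ℝ (Fin N)))
      map_add' := by
        intro w w'
        rw [← Finset.sum_add_distrib]
        exact Finset.sum_congr rfl fun i _ => by
          rw [show (w + w') i = w i + w' i from rfl, add_smul]
      map_smul' := by
        intro a w
        rw [RingHom.id_apply, Finset.smul_sum]
        exact Finset.sum_congr rfl fun i _ => by
          rw [show (a • w) i = a * w i from rfl, mul_smul] } with hL
  -- marginals machinery
  have margsum : ∀ (A : Finset (EuclideanSpace ℝ (Fin N))) (c : κ → ℝ) (π : κ → (EuclideanSpace ℝ (Fin N))), (∀ p, π p ∈ A) →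
      ∑ u ∈ A, (∑ p : κ, if π p = u then c p else 0) = ∑ p : κ, c p := by
    intro A c π hπ
    rw [Finset.sum_comm]
    refine Finset.sum_congr rfl fun p _ => ?_
    rw [Finset.sum_ite_eq A (π p) (fun _ => c p), if_pos (hπ p)]
  have margbary : ∀ (A : Finset (EuclideanSpace ℝ (Fin N))) (c : κ → ℝ) (π : κ → (EuclideanSpace ℝ (Fin N))), (∀ p, π p ∈ A) →
      ∑ u ∈ A, (∑ p : κ, if π p = u then c p else 0) • u = ∑ p : κ, c p • π p := by
    intro A c π hπ
    have : ∀ u ∈ A, (∑ p : κ, if π p = u then c p else 0) • u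
        = ∑ p : κ, (if π p = u then c p • π p else 0) := by
      intro u hu
      rw [Finset.sum_smul]
      refine Finset.sum_congr rfl fun p _ => ?_
      by_cases h : π p = u <;> simp [h]
    rw [Finset.sum_congr rfl this, Finset.sum_comm]
    refine Finset.sum_congr rfl fun p _ => ?_
    rw [Finset.sum_ite_eq A (π p) (fun u => c p • π p), if_pos (hπ p)]
  have margzero : ∀ (A : Finset (EuclideanSpace ℝ (Fin N))) (c : κ → ℝ) (π : κ → (EuclideanSpace ℝ (Fin N))), (∀ p, π p ∈ A) →
      ∀ u, u ∉ A → (∑ p : κ, if π p = u then c p else 0) = 0 := by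
    intro A c π hπ u hu
    refine Finset.sum_eq_zero fun p _ => ?_
    rw [if_neg]
    rintro rfl
    exact hu (hπ p)
  -- evaluation of sums of vectors in F
  have evalsum : ∀ (cc : κ → ℝ) (f : κ → F) (i : ι),
      (∑ p : κ, cc p • f p) i = ∑ p : κ, cc p * f p i := by
    intro cc f i
    rw [WithLp.ofLp_sum]
    exact (Finset.sum_apply i univ fun p => (cc p • f p).ofLp).trans
      (Finset.sum_congr rfl fun p _ => rfl)
  have hLdef : ∀ w : F, L w = ∑ i : ι, w i • (i : EuclideanSpace ℝ (Fin N)) := fun w => rfl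
  -- injectivity of L on the cone
  have hinj : ∀ z, (∃ c : κ → ℝ, (∀ p, 0 ≤ c p) ∧ ∑ p : κ, c p • g p = z) →
      L z = 0 → z = 0 := by
    rintro z ⟨c, hc, rfl⟩ hLz
    set T := ∑ p : κ, c p with hT
    set Pm : EuclideanSpace ℝ (Fin N) → ℝ :=
      fun u => ∑ p : κ, if (p.1 : EuclideanSpace ℝ (Fin N)) = u then c p else 0 with hPm
    set Qm : EuclideanSpace ℝ (Fin N) → ℝ :=
      fun u => ∑ p : κ, if (p.2 : EuclideanSpace ℝ (Fin N)) = u then c p else 0 with hQm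
    have hπ1 : ∀ p : κ, (p.1 : EuclideanSpace ℝ (Fin N)) ∈ s := fun p => p.1.2
    have hπ2 : ∀ p : κ, (p.2 : EuclideanSpace ℝ (Fin N)) ∈ t := fun p => p.2.2
    have hPsum : ∑ u ∈ s, Pm u = T := margsum s c _ hπ1
    have hQsum : ∑ u ∈ t, Qm u = T := margsum t c _ hπ2
    have hPbary : ∑ u ∈ s, Pm u • u = ∑ p : κ, c p • (p.1 : EuclideanSpace ℝ (Fin N)) :=
      margbary s c _ hπ1
    have hQbary : ∑ u ∈ t, Qm u • u = ∑ p : κ, c p • (p.2 : EuclideanSpace ℝ (Fin N)) :=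
      margbary t c _ hπ2
    have hPzero : ∀ u, u ∉ s → Pm u = 0 := fun u hu => margzero s c _ hπ1 u hu
    have hQzero : ∀ u, u ∉ t → Qm u = 0 := fun u hu => margzero t c _ hπ2 u hu
    have hPnn : ∀ u, 0 ≤ Pm u := fun u =>
      Finset.sum_nonneg fun p _ => by by_cases h : (p.1 : EuclideanSpace ℝ (Fin N)) = u <;>
        simp [h, hc p]
    have hQnn : ∀ u, 0 ≤ Qm u := fun u =>
      Finset.sum_nonneg fun p _ => by by_cases h : (p.2 : EuclideanSpace ℝ (Fin N)) = u <;>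
        simp [h, hc p]
    have hzeval : ∀ i : ι, (∑ p : κ, c p • g p) i = Pm (i : EuclideanSpace ℝ (Fin N))
        - Qm (i : EuclideanSpace ℝ (Fin N)) := by
      intro i
      rw [evalsum, hPm, hQm]
      rw [← Finset.sum_sub_distrib]
      refine Finset.sum_congr rfl fun p _ => ?_
      have : g p i = (if (p.1 : EuclideanSpace ℝ (Fin N)) = (i : EuclideanSpace ℝ (Fin N))
          then (1:ℝ) else 0) - (if (p.2 : EuclideanSpace ℝ (Fin N)) = (i : EuclideanSpace ℝ (Fin N))
          then (1:ℝ) else 0) := rfl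
      rw [this]
      by_cases h1 : (p.1 : EuclideanSpace ℝ (Fin N)) = (i : EuclideanSpace ℝ (Fin N)) <;>
        by_cases h2 : (p.2 : EuclideanSpace ℝ (Fin N)) = (i : EuclideanSpace ℝ (Fin N)) <;>
        simp [h1, h2]
    -- rewrite L z = 0 into equality of barycenters
    have hEq : ∑ u ∈ s, Pm u • u = ∑ u ∈ t, Qm u • u := by
      have e1 : L (∑ p : κ, c p • g p)
          = ∑ u ∈ V, (Pm u - Qm u) • u := by
        rw [hLdef]
        rw [← sum_coe_sort' V (fun u => (Pm u - Qm u) • u)]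
        exact Finset.sum_congr rfl fun i _ => by rw [hzeval i]
      have e2 : ∑ u ∈ V, (Pm u - Qm u) • u
          = ∑ u ∈ V, Pm u • u - ∑ u ∈ V, Qm u • u := by
        rw [← Finset.sum_sub_distrib]
        exact Finset.sum_congr rfl fun u _ => sub_smul _ _ _
      have e3 : ∑ u ∈ V, Pm u • u = ∑ u ∈ s, Pm u • u :=
        (Finset.sum_subset (fun u hu => hsV u hu) (fun u _ hu => by
          rw [hPzero u hu, zero_smul])).symm
      have e4 : ∑ u ∈ V, Qm u • u = ∑ u ∈ t, Qm u • u :=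
        (Finset.sum_subset (fun u hu => htV u hu) (fun u _ hu => by
          rw [hQzero u hu, zero_smul])).symm
      rw [e1, e2, e3, e4] at hLz
      exact sub_eq_zero.1 hLz
    have hT0 : 0 ≤ T := Finset.sum_nonneg fun p _ => hc p
    rcases hT0.eq_or_lt with hTz | hTpos
    · -- T = 0 : all coefficients vanish
      have : ∀ p ∈ (univ : Finset κ), c p = 0 :=
        (Finset.sum_eq_zero_iff_of_nonneg fun p _ => hc p).1 hTz.symm
      refine Finset.sum_eq_zero fun p _ => by rw [this p (mem_univ p), zero_smul]
    · -- T > 0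
      set zpt : EuclideanSpace ℝ (Fin N) := T⁻¹ • ∑ u ∈ s, Pm u • u with hzpt
      have hzs : zpt ∈ convexHull ℝ (↑s : Set (EuclideanSpace ℝ (Fin N))) := by
        have := Finset.centerMass_mem_convexHull s (fun u _ => hPnn u)
          (by rw [hPsum]; exact hTpos) (fun u hu => Finset.mem_coe.2 hu) (z := id)
        simpa [Finset.centerMass, hPsum, hzpt] using this
      have hzt : zpt ∈ convexHull ℝ (↑t : Set (EuclideanSpace ℝ (Fin N))) := by
        have := Finset.centerMass_mem_convexHull t (fun u _ => hQnn u)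
          (by rw [hQsum]; exact hTpos) (fun u hu => Finset.mem_coe.2 hu) (z := id)
        simpa [Finset.centerMass, hQsum, hzpt, hEq] using this
      have hzint : zpt ∈ convexHull ℝ (↑(s ∩ t) : Set (EuclideanSpace ℝ (Fin N))) := by
        rw [Finset.coe_inter]
        exact K.inter_subset_convexHull hs ht ⟨hzs, hzt⟩
      rw [Finset.convexHull_eq] at hzint
      obtain ⟨r, hr0, hrsum, hrcm⟩ := hzint
      have hrbary : ∑ u ∈ s ∩ t, r u • u = zpt := by
        have := Finset.centerMass_eq_of_sum_1 (s ∩ t) id hrsum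
        rw [hrcm] at this
        simpa using this.symm
      set r' : EuclideanSpace ℝ (Fin N) → ℝ := fun u => if u ∈ s ∩ t then r u else 0 with hr'
      have inter_s : s ∩ (s ∩ t) = s ∩ t :=
        Finset.inter_eq_right.mpr Finset.inter_subset_left
      have inter_t : t ∩ (s ∩ t) = s ∩ t :=
        Finset.inter_eq_right.mpr Finset.inter_subset_right
      have hr'sum_s : ∑ u ∈ s, r' u = 1 := by
        rw [hr']; rw [Finset.sum_ite_mem, inter_s, hrsum]
      have hr'sum_t : ∑ u ∈ t, r' u = 1 := by
        rw [hr']; rw [Finset.sum_ite_mem, inter_t, hrsum]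
      have hr'bary_s : ∑ u ∈ s, r' u • u = zpt := by
        have : ∀ u, r' u • u = if u ∈ s ∩ t then r u • u else 0 := by
          intro u; rw [hr']; by_cases h : u ∈ s ∩ t <;> simp [h]
        rw [Finset.sum_congr rfl fun u _ => this u, Finset.sum_ite_mem, inter_s, hrbary]
      have hr'bary_t : ∑ u ∈ t, r' u • u = zpt := by
        have : ∀ u, r' u • u = if u ∈ s ∩ t then r u • u else 0 := by
          intro u; rw [hr']; by_cases h : u ∈ s ∩ t <;> simp [h]
        rw [Finset.sum_congr rfl fun u _ => this u, Finset.sum_ite_mem, inter_t, hrbary]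
      -- uniqueness of barycentric coordinates on s and on t
      have hPr : ∀ u ∈ s, Pm u = T * r' u := by
        have h0 := affineIndependent_iff.1 (K.indep hs) univ
          (fun i => T⁻¹ * Pm (i : EuclideanSpace ℝ (Fin N)) - r' (i : EuclideanSpace ℝ (Fin N)))
          ?_ ?_
        · intro u hu
          have := h0 ⟨u, hu⟩ (mem_univ _)
          have huv : T⁻¹ * Pm u = r' u := by linarith [this]
          calc Pm u = T * (T⁻¹ * Pm u) := by field_simp
            _ = T * r' u := by rw [huv]
        · rw [sum_coe_sort' s (fun u => T⁻¹ * Pm u - r' u), Finset.sum_sub_distrib,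
            ← Finset.mul_sum, hPsum, hr'sum_s, inv_mul_cancel₀ hTpos.ne']
          ring
        · rw [sum_coe_sort' s (fun u => (T⁻¹ * Pm u - r' u) • u)]
          have : ∀ u, (T⁻¹ * Pm u - r' u) • u = T⁻¹ • (Pm u • u) - r' u • u := by
            intro u; rw [sub_smul, mul_smul]
          rw [Finset.sum_congr rfl fun u _ => this u, Finset.sum_sub_distrib,
            ← Finset.smul_sum, ← hzpt, hr'bary_s, sub_self]
      have hQr : ∀ u ∈ t, Qm u = T * r' u := by
        have h0 := affineIndependent_iff.1 (K.indep ht) univ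
          (fun i => T⁻¹ * Qm (i : EuclideanSpace ℝ (Fin N)) - r' (i : EuclideanSpace ℝ (Fin N)))
          ?_ ?_
        · intro u hu
          have := h0 ⟨u, hu⟩ (mem_univ _)
          have huv : T⁻¹ * Qm u = r' u := by linarith [this]
          calc Qm u = T * (T⁻¹ * Qm u) := by field_simp
            _ = T * r' u := by rw [huv]
        · rw [sum_coe_sort' t (fun u => T⁻¹ * Qm u - r' u), Finset.sum_sub_distrib,
            ← Finset.mul_sum, hQsum, hr'sum_t, inv_mul_cancel₀ hTpos.ne']
          ring
        · rw [sum_coe_sort' t (fun u => (T⁻¹ * Qm u - r' u) • u)]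
          have : ∀ u, (T⁻¹ * Qm u - r' u) • u = T⁻¹ • (Qm u • u) - r' u • u := by
            intro u; rw [sub_smul, mul_smul]
          rw [Finset.sum_congr rfl fun u _ => this u, Finset.sum_sub_distrib,
            ← Finset.smul_sum, ← hEq, ← hzpt, hr'bary_t, sub_self]
      -- conclude z = 0 pointwise
      refine PiLp.ext fun i => ?_
      rw [hzeval i]
      show Pm (i : EuclideanSpace ℝ (Fin N)) - Qm (i : EuclideanSpace ℝ (Fin N)) = 0
      have hr'out : ∀ u, u ∉ s ∩ t → r' u = 0 := by
        intro u hu; rw [hr']; exact if_neg hu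
      by_cases his : (i : EuclideanSpace ℝ (Fin N)) ∈ s <;>
        by_cases hit : (i : EuclideanSpace ℝ (Fin N)) ∈ t
      · rw [hPr _ his, hQr _ hit, sub_self]
      · rw [hPr _ his, hQzero _ hit, hr'out _ (fun h => hit (Finset.mem_inter.1 h).2)]
        ring
      · rw [hQr _ hit, hPzero _ his, hr'out _ (fun h => his (Finset.mem_inter.1 h).1)]
        ring
      · rw [hPzero _ his, hQzero _ hit, sub_self]
  obtain ⟨m, hm, hmle⟩ := coneMin g L hinj
  refine ⟨m⁻¹, inv_nonneg.2 hm.le, ?_⟩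
  intro βx βy x y hx1 hx2 hx3 hx4 hy1 hy2 hy3 hy4
  set vx : F := WithLp.toLp 2 (fun i : ι => βx (i : EuclideanSpace ℝ (Fin N))) with hvx
  set vy : F := WithLp.toLp 2 (fun i : ι => βy (i : EuclideanSpace ℝ (Fin N))) with hvy
  -- membership of the difference in the cone
  have hmem : ∃ c : κ → ℝ, (∀ p, 0 ≤ c p) ∧ ∑ p : κ, c p • g p = vx - vy := by
    refine ⟨fun p => βx (p.1 : EuclideanSpace ℝ (Fin N)) * βy (p.2 : EuclideanSpace ℝ (Fin N)),
      fun p => mul_nonneg (hx2 _) (hy2 _), ?_⟩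
    refine PiLp.ext fun i => ?_
    rw [evalsum]
    have gval : ∀ p : κ, g p i = (if (p.1 : EuclideanSpace ℝ (Fin N)) = (i : EuclideanSpace ℝ (Fin N))
        then (1:ℝ) else 0) - (if (p.2 : EuclideanSpace ℝ (Fin N)) = (i : EuclideanSpace ℝ (Fin N))
        then (1:ℝ) else 0) := fun p => rfl
    have key : ∑ p : κ, (βx (p.1 : EuclideanSpace ℝ (Fin N)) * βy (p.2 : EuclideanSpace ℝ (Fin N))) * g p i
        = βx (i : EuclideanSpace ℝ (Fin N)) - βy (i : EuclideanSpace ℝ (Fin N)) := by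
      have split : ∀ p : κ, (βx (p.1 : EuclideanSpace ℝ (Fin N)) * βy (p.2 : EuclideanSpace ℝ (Fin N))) * g p i
          = (if (p.1 : EuclideanSpace ℝ (Fin N)) = (i : EuclideanSpace ℝ (Fin N))
              then βx (p.1 : EuclideanSpace ℝ (Fin N)) * βy (p.2 : EuclideanSpace ℝ (Fin N)) else 0)
            - (if (p.2 : EuclideanSpace ℝ (Fin N)) = (i : EuclideanSpace ℝ (Fin N))
              then βx (p.1 : EuclideanSpace ℝ (Fin N)) * βy (p.2 : EuclideanSpace ℝ (Fin N)) else 0) := by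
        intro p
        rw [gval p]
        by_cases h1 : (p.1 : EuclideanSpace ℝ (Fin N)) = (i : EuclideanSpace ℝ (Fin N)) <;>
          by_cases h2 : (p.2 : EuclideanSpace ℝ (Fin N)) = (i : EuclideanSpace ℝ (Fin N)) <;>
          simp [h1, h2]
      rw [Finset.sum_congr rfl fun p _ => split p, Finset.sum_sub_distrib]
      have hxpart : ∑ p : κ, (if (p.1 : EuclideanSpace ℝ (Fin N)) = (i : EuclideanSpace ℝ (Fin N))
          then βx (p.1 : EuclideanSpace ℝ (Fin N)) * βy (p.2 : EuclideanSpace ℝ (Fin N)) else 0)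
          = βx (i : EuclideanSpace ℝ (Fin N)) := by
        rw [Fintype.sum_prod_type]
        have inner : ∀ a : {u // u ∈ s}, ∑ b : {u // u ∈ t},
            (if (a : EuclideanSpace ℝ (Fin N)) = (i : EuclideanSpace ℝ (Fin N))
              then βx (a : EuclideanSpace ℝ (Fin N)) * βy (b : EuclideanSpace ℝ (Fin N)) else 0)
            = if (a : EuclideanSpace ℝ (Fin N)) = (i : EuclideanSpace ℝ (Fin N))
              then βx (a : EuclideanSpace ℝ (Fin N)) else 0 := by
          intro a
          by_cases h : (a : EuclideanSpace ℝ (Fin N)) = (i : EuclideanSpace ℝ (Fin N))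
          · simp only [h, if_true, ← Finset.mul_sum]
            rw [sum_coe_sort' t βy, hy3, mul_one]
          · simp [h]
        rw [Finset.sum_congr rfl fun a _ => inner a,
          sum_coe_sort' s (fun u => if u = (i : EuclideanSpace ℝ (Fin N)) then βx u else 0),
          Finset.sum_ite_eq' s (i : EuclideanSpace ℝ (Fin N)) βx]
        by_cases h : (i : EuclideanSpace ℝ (Fin N)) ∈ s
        · rw [if_pos h]
        · rw [if_neg h, hx1 _ h]
      have hypart : ∑ p : κ, (if (p.2 : EuclideanSpace ℝ (Fin N)) = (i : EuclideanSpace ℝ (Fin N))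
          then βx (p.1 : EuclideanSpace ℝ (Fin N)) * βy (p.2 : EuclideanSpace ℝ (Fin N)) else 0)
          = βy (i : EuclideanSpace ℝ (Fin N)) := by
        rw [Fintype.sum_prod_type_right]
        have inner : ∀ b : {u // u ∈ t}, ∑ a : {u // u ∈ s},
            (if (b : EuclideanSpace ℝ (Fin N)) = (i : EuclideanSpace ℝ (Fin N))
              then βx (a : EuclideanSpace ℝ (Fin N)) * βy (b : EuclideanSpace ℝ (Fin N)) else 0)
            = if (b : EuclideanSpace ℝ (Fin N)) = (i : EuclideanSpace ℝ (Fin N))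
              then βy (b : EuclideanSpace ℝ (Fin N)) else 0 := by
          intro b
          by_cases h : (b : EuclideanSpace ℝ (Fin N)) = (i : EuclideanSpace ℝ (Fin N))
          · simp only [h, if_true]
            rw [← Finset.sum_mul, sum_coe_sort' s βx, hx3, one_mul]
          · simp [h]
        rw [Finset.sum_congr rfl fun b _ => inner b,
          sum_coe_sort' t (fun u => if u = (i : EuclideanSpace ℝ (Fin N)) then βy u else 0),
          Finset.sum_ite_eq' t (i : EuclideanSpace ℝ (Fin N)) βy]
        by_cases h : (i : EuclideanSpace ℝ (Fin N)) ∈ t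
        · rw [if_pos h]
        · rw [if_neg h, hy1 _ h]
      rw [hxpart, hypart]
    rw [key]
    rfl
  -- L maps the difference to x - y
  have hLd : L (vx - vy) = x - y := by
    rw [map_sub]
    have hLx : L vx = x := by
      rw [hLdef]
      rw [sum_coe_sort' V (fun u => βx u • u)]
      rw [← hx4]
      exact (Finset.sum_subset (fun u hu => hsV u hu) fun u _ hu => by
        rw [hx1 u hu, zero_smul]).symm
    have hLy : L vy = y := by
      rw [hLdef]
      rw [sum_coe_sort' V (fun u => βy u • u)]
      rw [← hy4]
      exact (Finset.sum_subset (fun u hu => htV u hu) fun u _ hu => by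
        rw [hy1 u hu, zero_smul]).symm
    rw [hLx, hLy]
  -- the euclidean norm is the claimed square root
  have hnorm : ‖vx - vy‖ = Real.sqrt (∑ u ∈ V, (βx u - βy u) ^ 2) := by
    rw [EuclideanSpace.norm_eq]
    congr 1
    rw [← sum_coe_sort' V (fun u => (βx u - βy u) ^ 2)]
    refine Finset.sum_congr rfl fun i _ => ?_
    rw [show (vx - vy) i = βx (i : EuclideanSpace ℝ (Fin N)) - βy (i : EuclideanSpace ℝ (Fin N))
      from rfl, Real.norm_eq_abs, sq_abs]
  have hle := hmle (vx - vy) hmem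
  rw [hLd] at hle
  calc Real.sqrt (∑ u ∈ V, (βx u - βy u) ^ 2) = ‖vx - vy‖ := hnorm.symm
    _ = m⁻¹ * (m * ‖vx - vy‖) := by field_simp
    _ ≤ m⁻¹ * ‖x - y‖ := mul_le_mul_of_nonneg_left hle (inv_nonneg.2 hm.le)


open Classical in
/-- for a finite simplicial complex `P` in `ℝ^N`, the barycentric coordinate
map `β : |P| → ℝ^{P⁽⁰⁾}` is Lipschitz (w.r.t. the Euclidean metrics).  Barycentric
coordinates of `x ∈ |P|` are characterized as the unique weights `βx : E → ℝ`, vanishing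
outside (the vertex set of) some face containing `x`, nonnegative, summing to `1` and with
barycenter `x`. -/
theorem stmt_18 {N : ℕ}
    (K : Geometry.SimplicialComplex ℝ (EuclideanSpace ℝ (Fin N)))
    (hfin : K.faces.Finite) :
    ∃ C : ℝ, ∀ x ∈ K.space, ∀ y ∈ K.space,
      ∀ βx βy : EuclideanSpace ℝ (Fin N) → ℝ,
      (∃ s ∈ K.faces, (∀ u, u ∉ s → βx u = 0) ∧ (∀ u, 0 ≤ βx u) ∧
        (∑ u ∈ s, βx u) = 1 ∧ (∑ u ∈ s, βx u • u) = x) →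
      (∃ s ∈ K.faces, (∀ u, u ∉ s → βy u = 0) ∧ (∀ u, 0 ≤ βy u) ∧
        (∑ u ∈ s, βy u) = 1 ∧ (∑ u ∈ s, βy u • u) = y) →
      Real.sqrt (∑ u ∈ hfin.toFinset.biUnion id, (βx u - βy u) ^ 2) ≤ C * ‖x - y‖ := by
  classical
  set P := hfin.toFinset ×ˢ hfin.toFinset with hP
  have hchoice : ∀ p : Finset (EuclideanSpace ℝ (Fin N)) × Finset (EuclideanSpace ℝ (Fin N)),
      ∃ C : ℝ, 0 ≤ C ∧ (p.1 ∈ K.faces → p.2 ∈ K.faces →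
        ∀ (βx βy : EuclideanSpace ℝ (Fin N) → ℝ) (x y : EuclideanSpace ℝ (Fin N)),
        (∀ u, u ∉ p.1 → βx u = 0) → (∀ u, 0 ≤ βx u) → (∑ u ∈ p.1, βx u) = 1 →
        (∑ u ∈ p.1, βx u • u) = x →
        (∀ u, u ∉ p.2 → βy u = 0) → (∀ u, 0 ≤ βy u) → (∑ u ∈ p.2, βy u) = 1 →
        (∑ u ∈ p.2, βy u • u) = y →
        Real.sqrt (∑ u ∈ hfin.toFinset.biUnion id, (βx u - βy u) ^ 2) ≤ C * ‖x - y‖) := by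
    intro p
    by_cases h : p.1 ∈ K.faces ∧ p.2 ∈ K.faces
    · obtain ⟨C, hC0, hC⟩ := pairBound K hfin h.1 h.2
      exact ⟨C, hC0, fun _ _ => hC⟩
    · exact ⟨0, le_rfl, fun h1 h2 => absurd ⟨h1, h2⟩ h⟩
  choose f hf0 hf using hchoice
  refine ⟨∑ p ∈ P, f p, ?_⟩
  rintro x _ y _ βx βy ⟨s, hs, hx1, hx2, hx3, hx4⟩ ⟨t, ht, hy1, hy2, hy3, hy4⟩
  have hst : (s, t) ∈ P :=
    Finset.mem_product.2 ⟨hfin.mem_toFinset.2 hs, hfin.mem_toFinset.2 ht⟩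
  have hb := hf (s, t) hs ht βx βy x y hx1 hx2 hx3 hx4 hy1 hy2 hy3 hy4
  calc Real.sqrt (∑ u ∈ hfin.toFinset.biUnion id, (βx u - βy u) ^ 2)
      ≤ f (s, t) * ‖x - y‖ := hb
    _ ≤ (∑ p ∈ P, f p) * ‖x - y‖ :=
        mul_le_mul_of_nonneg_right
          (Finset.single_le_sum (fun p _ => hf0 p) hst) (norm_nonneg _)
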